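/- Let f be the standard normal density and Q its tail function. For all real x: x·f(x)·Q(x) + Q(x)² − f(x)² > 0. -/

import Mathlib

open Real MeasureTheory Set Filter

noncomputable def stdNormalPdf (x : ℝ) : ℝ := (Real.sqrt (2 * Real.pi))⁻¹ * Real.exp (-x ^ 2 / 2)

noncomputable def gaussQ (x : ℝ) : ℝ := ∫ t in Set.Ici x, stdNormalPdf t

noncomputable def gaussPhi (x : ℝ) : ℝ := ∫ t in Set.Iic x, stdNormalPdf t

lemma pdf_pos (x : ℝ) : 0 < stdNormalPdf x := by
  have h : 0 < Real.sqrt (2 * Real.pi) := Real.sqrt_pos.2 (by positivity)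
  exact mul_pos (inv_pos.2 h) (Real.exp_pos _)

lemma pdf_cont : Continuous stdNormalPdf := by
  unfold stdNormalPdf
  fun_prop

lemma pdf_integrable : Integrable stdNormalPdf := by
  have h : Integrable (fun x : ℝ => Real.exp (-(1/2) * x ^ 2)) :=
    integrable_exp_neg_mul_sq (by norm_num)
  have := h.const_mul (Real.sqrt (2 * Real.pi))⁻¹
  refine this.congr (Filter.Eventually.of_forall fun x => ?_)
  unfold stdNormalPdf; ring_nf

lemma pdf_hasDeriv (x : ℝ) : HasDerivAt stdNormalPdf (-x * stdNormalPdf x) x := by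
  have h1 : HasDerivAt (fun y : ℝ => -y ^ 2 / 2) (-x) x := by
    have := ((hasDerivAt_pow 2 x).neg).div_const 2
    convert this using 1
    · rfl
    · rfl
    simp; ring
  have h2 := h1.exp
  have h3 := h2.const_mul (Real.sqrt (2 * Real.pi))⁻¹
  convert h3 using 1
  · rfl
  · rfl
  · rfl
  unfold stdNormalPdf; ring

lemma gaussQ_eq (y : ℝ) :
    gaussQ y = (∫ t in Ioi (0:ℝ), stdNormalPdf t) - ∫ t in (0:ℝ)..y, stdNormalPdf t := by
  have hint := pdf_integrable
  have h1 : gaussQ y = ∫ t in Ioi y, stdNormalPdf t := integral_Ici_eq_integral_Ioi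
  have h2 : (∫ t in Iic y, stdNormalPdf t) + (∫ t in Ioi y, stdNormalPdf t)
      = ∫ t, stdNormalPdf t :=
    intervalIntegral.integral_Iic_add_Ioi hint.integrableOn hint.integrableOn
  have h3 : (∫ t in Iic (0:ℝ), stdNormalPdf t) + (∫ t in Ioi (0:ℝ), stdNormalPdf t)
      = ∫ t, stdNormalPdf t :=
    intervalIntegral.integral_Iic_add_Ioi hint.integrableOn hint.integrableOn
  have h4 : (∫ t in Iic y, stdNormalPdf t) - (∫ t in Iic (0:ℝ), stdNormalPdf t)
      = ∫ t in (0:ℝ)..y, stdNormalPdf t :=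
    intervalIntegral.integral_Iic_sub_Iic hint.integrableOn hint.integrableOn
  linarith

lemma gaussQ_hasDeriv (x : ℝ) : HasDerivAt gaussQ (-(stdNormalPdf x)) x := by
  have hftc : HasDerivAt (fun u => ∫ t in (0:ℝ)..u, stdNormalPdf t) (stdNormalPdf x) x :=
    intervalIntegral.integral_hasDerivAt_right pdf_integrable.intervalIntegrable
      pdf_cont.aestronglyMeasurable.stronglyMeasurableAtFilter pdf_cont.continuousAt
  have h := (hasDerivAt_const x (∫ t in Ioi (0:ℝ), stdNormalPdf t)).sub hftc
  have heq : gaussQ = fun y => (∫ t in Ioi (0:ℝ), stdNormalPdf t) - ∫ t in (0:ℝ)..y, stdNormalPdf t :=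
    funext gaussQ_eq
  rw [heq]
  exact h.congr_deriv (zero_sub _)

lemma gaussQ_tendsto : Tendsto gaussQ atTop (nhds 0) := by
  have h : Tendsto (fun y => ∫ t in (0:ℝ)..y, stdNormalPdf t) atTop
      (nhds (∫ t in Ioi (0:ℝ), stdNormalPdf t)) :=
    intervalIntegral_tendsto_integral_Ioi 0 pdf_integrable.integrableOn tendsto_id
  have h2 := (tendsto_const_nhds (x := ∫ t in Ioi (0:ℝ), stdNormalPdf t) (f := atTop)).sub h
  rw [sub_self] at h2
  refine h2.congr fun y => (gaussQ_eq y).symm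

lemma pdf_tendsto : Tendsto stdNormalPdf atTop (nhds 0) := by
  have h1 : Tendsto (fun x : ℝ => -x ^ 2 / 2) atTop atBot := by
    have : Tendsto (fun x : ℝ => x ^ 2) atTop atTop := tendsto_pow_atTop (by norm_num)
    have := (tendsto_neg_atTop_atBot.comp this)
    exact this.atBot_div_const (by norm_num)
  have h2 : Tendsto (fun x : ℝ => Real.exp (-x ^ 2 / 2)) atTop (nhds 0) :=
    Real.tendsto_exp_atBot.comp h1
  have h3 := h2.const_mul (Real.sqrt (2 * Real.pi))⁻¹
  rw [mul_zero] at h3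
  exact h3.congr fun x => rfl

lemma xpdf_tendsto : Tendsto (fun x => x * stdNormalPdf x) atTop (nhds 0) := by
  have key : Tendsto (fun x : ℝ => x * Real.exp (-x ^ 2 / 2)) atTop (nhds 0) := by
    have hbound : Tendsto (fun x : ℝ => Real.exp (x - x ^ 2 / 2)) atTop (nhds 0) := by
      refine Real.tendsto_exp_atBot.comp ?_
      refine tendsto_atBot_mono' atTop ?_ tendsto_neg_atTop_atBot
      filter_upwards [eventually_ge_atTop (4:ℝ)] with x hx
      nlinarith
    refine squeeze_zero' ?_ ?_ hbound
    · filter_upwards [eventually_ge_atTop (0:ℝ)] with x hx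
      positivity
    · filter_upwards [eventually_ge_atTop (0:ℝ)] with x hx
      have hxe : x ≤ Real.exp x := by
        have := Real.add_one_le_exp x; linarith
      calc x * Real.exp (-x ^ 2 / 2) ≤ Real.exp x * Real.exp (-x ^ 2 / 2) :=
            mul_le_mul_of_nonneg_right hxe (Real.exp_pos _).le
        _ = Real.exp (x - x ^ 2 / 2) := by rw [← Real.exp_add]; ring_nf
  have h := key.const_mul (Real.sqrt (2 * Real.pi))⁻¹
  rw [mul_zero] at h
  refine h.congr fun x => ?_
  unfold stdNormalPdf; ring

/-- The auxiliary function `h(x) = Q(x) - x f(x)/(1+x²)`. -/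
noncomputable def millsAux (x : ℝ) : ℝ := gaussQ x - x * stdNormalPdf x / (1 + x ^ 2)

lemma millsAux_hasDeriv (x : ℝ) :
    HasDerivAt millsAux (-2 * stdNormalPdf x / (1 + x ^ 2) ^ 2) x := by
  have hden : (1 : ℝ) + x ^ 2 ≠ 0 := by positivity
  have hu : HasDerivAt (fun y => y * stdNormalPdf y)
      (1 * stdNormalPdf x + x * (-x * stdNormalPdf x)) x :=
    (hasDerivAt_id x).mul (pdf_hasDeriv x)
  have hv : HasDerivAt (fun y : ℝ => 1 + y ^ 2) (0 + 2 * x ^ 1) x :=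
    (hasDerivAt_const x 1).add (hasDerivAt_pow 2 x)
  have hdiv := hu.div hv (by positivity)
  have h := (gaussQ_hasDeriv x).sub hdiv
  have heq : millsAux = fun y => gaussQ y - y * stdNormalPdf y / (1 + y ^ 2) := rfl
  rw [heq]
  convert h using 1
  · rfl
  · rfl
  · rfl
  field_simp
  ring

lemma millsAux_tendsto : Tendsto millsAux atTop (nhds 0) := by
  have h1 : Tendsto (fun x : ℝ => (1 + x ^ 2)⁻¹) atTop (nhds 0) := by
    refine tendsto_inv_atTop_zero.comp ?_
    have : Tendsto (fun x : ℝ => x ^ 2) atTop atTop := tendsto_pow_atTop (by norm_num)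
    exact tendsto_atTop_add_const_left atTop 1 this
  have h2 : Tendsto (fun x => x * stdNormalPdf x * (1 + x ^ 2)⁻¹) atTop (nhds 0) := by
    have := xpdf_tendsto.mul h1
    rwa [zero_mul] at this
  have h := gaussQ_tendsto.sub h2
  rw [sub_zero] at h
  refine h.congr fun x => ?_
  unfold millsAux; ring

lemma pos_of_strictAnti_tendsto {g : ℝ → ℝ} (ha : StrictAnti g)
    (hl : Tendsto g atTop (nhds 0)) (x : ℝ) : 0 < g x := by
  have h1 : 0 ≤ g (x + 1) := by
    refine le_of_tendsto hl ?_
    filter_upwards [eventually_ge_atTop (x + 1)] with y hy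
    exact ha.antitone hy
  exact lt_of_le_of_lt h1 (ha (lt_add_one x))

lemma millsAux_pos (x : ℝ) : 0 < millsAux x := by
  refine pos_of_strictAnti_tendsto ?_ millsAux_tendsto x
  refine strictAnti_of_deriv_neg fun y => ?_
  rw [(millsAux_hasDeriv y).deriv]
  have h1 := pdf_pos y
  have heq : -2 * stdNormalPdf y / (1 + y ^ 2) ^ 2
      = -(2 * stdNormalPdf y / (1 + y ^ 2) ^ 2) := by ring
  rw [heq, neg_lt_zero]
  positivity

noncomputable def gFun (x : ℝ) : ℝ :=
  x * stdNormalPdf x * gaussQ x + gaussQ x ^ 2 - stdNormalPdf x ^ 2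

lemma gFun_hasDeriv (x : ℝ) :
    HasDerivAt gFun (-(stdNormalPdf x * (1 + x ^ 2)) * millsAux x) x := by
  have hf := pdf_hasDeriv x
  have hQ := gaussQ_hasDeriv x
  have h1 : HasDerivAt (fun y => y * stdNormalPdf y * gaussQ y)
      ((1 * stdNormalPdf x + x * (-x * stdNormalPdf x)) * gaussQ x
        + x * stdNormalPdf x * -(stdNormalPdf x)) x :=
    (((hasDerivAt_id x).mul hf).mul hQ)
  have h2 : HasDerivAt (fun y => gaussQ y ^ 2) (2 * gaussQ x ^ 1 * -(stdNormalPdf x)) x :=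
    hQ.pow 2
  have h3 : HasDerivAt (fun y => stdNormalPdf y ^ 2)
      (2 * stdNormalPdf x ^ 1 * (-x * stdNormalPdf x)) x := hf.pow 2
  have h := (h1.add h2).sub h3
  have heq : gFun = fun y => y * stdNormalPdf y * gaussQ y + gaussQ y ^ 2 - stdNormalPdf y ^ 2 :=
    rfl
  rw [heq]
  convert h using 1
  · rfl
  · rfl
  · rfl
  have hden : (1 : ℝ) + x ^ 2 ≠ 0 := by positivity
  unfold millsAux
  field_simp
  ring

lemma gFun_tendsto : Tendsto gFun atTop (nhds 0) := by
  have h1 := (xpdf_tendsto.mul gaussQ_tendsto).add (gaussQ_tendsto.mul gaussQ_tendsto)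
  have h2 := h1.sub (pdf_tendsto.mul pdf_tendsto)
  simp only [zero_mul, mul_zero, add_zero, sub_zero] at h2
  refine h2.congr fun x => ?_
  unfold gFun; ring

theorem stmt19 (x : ℝ) :
    x * stdNormalPdf x * gaussQ x + gaussQ x ^ 2 - stdNormalPdf x ^ 2 > 0 := by
  have hpos : 0 < gFun x := by
    refine pos_of_strictAnti_tendsto ?_ gFun_tendsto x
    refine strictAnti_of_deriv_neg fun y => ?_
    rw [(gFun_hasDeriv y).deriv]
    have h1 := pdf_pos y
    have h2 := millsAux_pos y
    have h3 : (0:ℝ) < 1 + y ^ 2 := by positivity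
    have : (0:ℝ) < stdNormalPdf y * (1 + y ^ 2) * millsAux y := by positivity
    linarith
  exact hpos
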